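/- Let p ∈ ℝ with p > 1, let S be a finite set with at least two elements, let w : S → (0, 1) with Σ_{x∈S} w_x = 1, let γ : S → [0,∞), let ε > 0, and let x₀, x̂ ∈ S with x₀ ≠ x̂ be such that γ_{x̂} > 0, γ_{x₀} ≤ ε·γ_{x̂} and ε(1 − w_{x₀})/w_{x̂} < 1. Then (Σ_{x∈S} w_x γ_x)^p ≤ (1 − δ)·Σ_{x∈S} w_x γ_x^p, where δ = (1 − ε(1 − w_{x₀})/w_{x̂})² · (1 − w_{x₀}) · min{ p(p − 1)·w_{x₀}/2 , 1 − (1 − w_{x₀})^{p−1} }. -/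

import Mathlib

open Real Set

private lemma tangent_conv {q a b : ℝ} (hq : 1 ≤ q) (ha : 0 ≤ a) (hab : a ≤ b) :
    a ^ q + q * a ^ (q - 1) * (b - a) ≤ b ^ q := by
  rcases eq_or_lt_of_le ha with rfl | ha'
  · rcases eq_or_lt_of_le hq with rfl | hq'
    · norm_num [Real.rpow_one, Real.rpow_zero]
    · rw [Real.zero_rpow (ne_of_gt (by linarith : (0:ℝ) < q)),
        Real.zero_rpow (sub_ne_zero.2 hq'.ne')]
      simpa using Real.rpow_nonneg hab q
  · have hb : 0 < b := ha'.trans_le hab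
    have hber := one_add_mul_self_le_rpow_one_add (by
      have : (0:ℝ) ≤ (b - a) / a := div_nonneg (by linarith) ha'.le
      linarith : (-1:ℝ) ≤ (b - a) / a) hq
    have h1 : 1 + (b - a) / a = b / a := by field_simp; ring
    rw [h1] at hber
    have h2 : (b / a) ^ q = b ^ q / a ^ q := Real.div_rpow hb.le ha'.le q
    rw [h2] at hber
    have haq : 0 < a ^ q := Real.rpow_pos_of_pos ha' q
    have h3 := mul_le_mul_of_nonneg_left hber haq.le
    have h4 : a ^ q * (b ^ q / a ^ q) = b ^ q := by field_simp
    have h5 : a ^ q * (1 + q * ((b - a) / a)) = a ^ q + q * a ^ (q - 1) * (b - a) := by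
      have e : a ^ (q - 1) = a ^ q / a := by rw [Real.rpow_sub ha', Real.rpow_one]
      rw [e]; field_simp
    rw [h4, h5] at h3
    exact h3

private lemma tangent_conc {q a b : ℝ} (hq0 : 0 < q) (hq : q ≤ 1) (ha : 0 ≤ a) (hab : a ≤ b)
    (hb1 : b ≤ 1) (hb : 0 < b) :
    a ^ q + q * (b - a) ≤ b ^ q := by
  have ht1 : (b - a) / b ≤ 1 := by rw [div_le_one hb]; linarith
  have hber := rpow_one_add_le_one_add_mul_self (by linarith : (-1:ℝ) ≤ -((b - a) / b)) hq0.le hq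
  have h1 : 1 + -((b - a) / b) = a / b := by field_simp; ring
  rw [h1] at hber
  have h2 : (a / b) ^ q = a ^ q / b ^ q := Real.div_rpow ha hb.le q
  rw [h2] at hber
  have hbq : 0 < b ^ q := Real.rpow_pos_of_pos hb q
  have h3 := mul_le_mul_of_nonneg_left hber hbq.le
  have h4 : b ^ q * (a ^ q / b ^ q) = a ^ q := by field_simp
  have h5 : b ^ q * (1 + q * -((b - a) / b)) = b ^ q - q * (b - a) * b ^ (q - 1) := by
    have e : b ^ (q - 1) = b ^ q / b := by rw [Real.rpow_sub hb, Real.rpow_one]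
    rw [e]; field_simp; ring
  rw [h4, h5] at h3
  have h6 : 1 ≤ b ^ (q - 1) := by
    have := Real.rpow_le_rpow_of_exponent_ge hb hb1 (by linarith : q - 1 ≤ 0)
    simpa [Real.rpow_zero] using this
  nlinarith [mul_nonneg hq0.le (sub_nonneg.2 hab)]

private lemma caseA {p W c : ℝ} (hp : 1 < p) (hp2 : p ≤ 2) (hW : 0 < W) (hW1 : W < 1)
    (hc0 : 0 ≤ c) (hc1 : c ≤ 1) :
    p * (p - 1) / 2 * ((1 - W) * W * (1 - c) ^ 2) ≤
      (1 - W) * c ^ p + W - ((1 - W) * c + W) ^ p := by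
  set f : ℝ → ℝ := fun t =>
    (1 - W) * t ^ p + W - ((1 - W) * t + W) ^ p - p * (p - 1) / 2 * ((1 - W) * W) * (1 - t) ^ 2
    with hfdef
  set f' : ℝ → ℝ := fun t =>
    (1 - W) * (p * t ^ (p - 1)) - (1 - W) * p * ((1 - W) * t + W) ^ (p - 1)
      + p * (p - 1) / 2 * ((1 - W) * W) * (2 * (1 - t))
    with hf'def
  have hm : ∀ t : ℝ, HasDerivAt (fun t => (1 - W) * t + W) (1 - W) t := fun t => by
    simpa using ((hasDerivAt_id t).const_mul (1 - W)).add_const W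
  have hderiv : ∀ t ∈ Set.Ioo (0:ℝ) 1, HasDerivAt f (f' t) t := by
    intro t ht
    have d1 : HasDerivAt (fun t : ℝ => t ^ p) (p * t ^ (p - 1)) t :=
      Real.hasDerivAt_rpow_const (Or.inr hp.le)
    have d2 : HasDerivAt (fun t : ℝ => (1 - W) * t ^ p + W) ((1 - W) * (p * t ^ (p - 1))) t :=
      (d1.const_mul (1 - W)).add_const W
    have d3 : HasDerivAt (fun t : ℝ => ((1 - W) * t + W) ^ p)
        ((1 - W) * p * ((1 - W) * t + W) ^ (p - 1)) t :=
      (hm t).rpow_const (Or.inr hp.le)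
    have d4 : HasDerivAt (fun t : ℝ => (1 - t) ^ 2) (2 * (1 - t) ^ 1 * (-1)) t :=
      ((hasDerivAt_id t).const_sub 1).pow 2
    have d5 : HasDerivAt (fun t : ℝ => p * (p - 1) / 2 * ((1 - W) * W) * (1 - t) ^ 2)
        (p * (p - 1) / 2 * ((1 - W) * W) * (2 * (1 - t) ^ 1 * (-1))) t :=
      d4.const_mul _
    have htot := (d2.sub d3).sub d5
    convert htot using 1
    · rfl
    · rfl
    · rfl
    simp only [hf'def, pow_one]
    ring
  have hcont : ContinuousOn f (Set.Icc 0 1) := by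
    have c1 : Continuous fun t : ℝ => t ^ p := continuous_rpow_const (by linarith)
    have c2 : Continuous fun t : ℝ => ((1 - W) * t + W) ^ p :=
      Continuous.rpow_const (by continuity) (fun x => Or.inr (by linarith))
    exact Continuous.continuousOn (by
      apply Continuous.sub
      apply Continuous.sub
      · exact (continuous_const.mul c1).add continuous_const
      · exact c2
      · exact continuous_const.mul ((continuous_const.sub continuous_id).pow 2))
  have hf'neg : ∀ t ∈ Set.Ioo (0:ℝ) 1, f' t ≤ 0 := by
    intro t ht
    have hmt : t ≤ (1 - W) * t + W := by nlinarith [ht.2, hW]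
    have hm1 : (1 - W) * t + W ≤ 1 := by nlinarith [ht.2, hW]
    have hm0 : 0 < (1 - W) * t + W := by nlinarith [ht.1, hW, hW1]
    have htc := tangent_conc (by linarith : 0 < p - 1) (by linarith) ht.1.le hmt hm1 hm0
    -- t^(p-1) + (p-1) * ((1-W)*t + W - t) ≤ ((1-W)*t+W)^(p-1)
    have key : p * (1 - W) *
        (t ^ (p - 1) - ((1 - W) * t + W) ^ (p - 1) + (p - 1) * (W * (1 - t))) ≤ 0 := by
      apply mul_nonpos_of_nonneg_of_nonpos
      · nlinarith [hp, hW1]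
      · nlinarith [htc]
    simp only [hf'def]
    nlinarith [key]
  have hanti : AntitoneOn f (Set.Icc 0 1) := by
    apply antitoneOn_of_hasDerivWithinAt_nonpos (convex_Icc 0 1) hcont
    · intro t ht
      rw [interior_Icc] at ht
      exact ((hderiv t ht).hasDerivWithinAt).mono interior_subset
    · intro t ht
      rw [interior_Icc] at ht
      exact hf'neg t ht
  have h01 : (1:ℝ) ∈ Set.Icc (0:ℝ) 1 := by constructor <;> norm_num
  have hcI : c ∈ Set.Icc (0:ℝ) 1 := ⟨hc0, hc1⟩
  have hfc := hanti hcI h01 hc1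
  have hf1 : f 1 = 0 := by
    have e1 : ((1 - W) * 1 + W) = 1 := by ring
    simp only [hfdef, e1, Real.one_rpow]
    ring
  rw [hf1] at hfc
  simp only [hfdef] at hfc
  nlinarith [hfc]

private lemma phi_nonneg {p W : ℝ} (hp2 : 2 ≤ p) (hW : 0 < W) (hW1 : W < 1) {t : ℝ}
    (ht0 : 0 ≤ t) (ht1 : t ≤ 1) :
    0 ≤ p * (1 - W) * (1 - t) * (t ^ (p - 1) - ((1 - W) * t + W) ^ (p - 1))
      + 2 * ((1 - W) * t ^ p + W - ((1 - W) * t + W) ^ p) := by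
  have hp1 : (1:ℝ) < p := by linarith
  set φ : ℝ → ℝ := fun t =>
    p * (1 - W) * (1 - t) * (t ^ (p - 1) - ((1 - W) * t + W) ^ (p - 1))
      + 2 * ((1 - W) * t ^ p + W - ((1 - W) * t + W) ^ p) with hφdef
  set φ' : ℝ → ℝ := fun t =>
    p * (1 - W) * ((-1) * (t ^ (p - 1) - ((1 - W) * t + W) ^ (p - 1))
        + (1 - t) * ((p - 1) * t ^ (p - 1 - 1) - (1 - W) * (p - 1) * ((1 - W) * t + W) ^ (p - 1 - 1)))
      + 2 * ((1 - W) * (p * t ^ (p - 1)) - (1 - W) * p * ((1 - W) * t + W) ^ (p - 1)) with hφ'def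
  have hm : ∀ t : ℝ, HasDerivAt (fun t => (1 - W) * t + W) (1 - W) t := fun t => by
    simpa using ((hasDerivAt_id t).const_mul (1 - W)).add_const W
  have hderiv : ∀ t ∈ Set.Ioo (0:ℝ) 1, HasDerivAt φ (φ' t) t := by
    intro t ht
    have d1 : HasDerivAt (fun t : ℝ => t ^ (p - 1)) ((p - 1) * t ^ (p - 1 - 1)) t :=
      Real.hasDerivAt_rpow_const (Or.inr (by linarith))
    have d2 : HasDerivAt (fun t : ℝ => ((1 - W) * t + W) ^ (p - 1))
        ((1 - W) * (p - 1) * ((1 - W) * t + W) ^ (p - 1 - 1)) t :=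
      (hm t).rpow_const (Or.inr (by linarith))
    have d3 : HasDerivAt (fun t : ℝ => 1 - t) (-1) t := (hasDerivAt_id t).const_sub 1
    have d4 := (d3.mul (d1.sub d2)).const_mul (p * (1 - W))
    have d5 : HasDerivAt (fun t : ℝ => t ^ p) (p * t ^ (p - 1)) t :=
      Real.hasDerivAt_rpow_const (Or.inr hp1.le)
    have d6 : HasDerivAt (fun t : ℝ => ((1 - W) * t + W) ^ p)
        ((1 - W) * p * ((1 - W) * t + W) ^ (p - 1)) t := (hm t).rpow_const (Or.inr hp1.le)
    have d7 := (((d5.const_mul (1 - W)).add_const W).sub d6).const_mul (2:ℝ)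
    have htot := d4.add d7
    convert htot using 1
    · rfl
    · rfl
    rw [hφdef]
    funext x
    simp only [Pi.add_apply, Pi.mul_apply, Pi.sub_apply]
    ring
    rfl
  have hcont : ContinuousOn φ (Set.Icc 0 1) := by
    have c1 : Continuous fun t : ℝ => t ^ (p - 1) := continuous_rpow_const (by linarith)
    have c1' : Continuous fun t : ℝ => t ^ p := continuous_rpow_const (by linarith)
    have c2 : Continuous fun t : ℝ => ((1 - W) * t + W) ^ (p - 1) :=
      Continuous.rpow_const (by continuity) (fun x => Or.inr (by linarith))
    have c3 : Continuous fun t : ℝ => ((1 - W) * t + W) ^ p :=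
      Continuous.rpow_const (by continuity) (fun x => Or.inr (by linarith))
    exact Continuous.continuousOn (by
      apply Continuous.add
      · exact (continuous_const.mul (continuous_const.sub continuous_id)).mul (c1.sub c2)
      · exact continuous_const.mul (((continuous_const.mul c1').add continuous_const).sub c3))
  have hφ'neg : ∀ t ∈ Set.Ioo (0:ℝ) 1, φ' t ≤ 0 := by
    intro t ht
    set m := (1 - W) * t + W with hmdef
    have hmt : t ≤ m := by simp only [hmdef]; nlinarith [ht.2, hW]
    have hm1 : m ≤ 1 := by simp only [hmdef]; nlinarith [ht.2, hW]
    have hm0 : 0 < m := by simp only [hmdef]; nlinarith [ht.1, hW, hW1]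
    -- tangent: t^(p-1) + (p-1) * t^(p-2) * (m - t) ≤ m^(p-1)
    have htc := tangent_conv (by linarith : 1 ≤ p - 1) ht.1.le hmt
    -- monotone: t^(p-2) ≤ m^(p-2)
    have hmono : t ^ (p - 1 - 1) ≤ m ^ (p - 1 - 1) :=
      Real.rpow_le_rpow ht.1.le hmt (by linarith)
    -- bracket ≤ 0
    have key : p * (1 - W) * ((t ^ (p - 1) - m ^ (p - 1))
        + (p - 1) * (1 - t) * (t ^ (p - 1 - 1) - (1 - W) * m ^ (p - 1 - 1))) ≤ 0 := by
      apply mul_nonpos_of_nonneg_of_nonpos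
      · nlinarith [hp1, hW1]
      · have e1 : m - t = W * (1 - t) := by simp only [hmdef]; ring
        rw [e1] at htc
        have h2 : (p - 1) * (1 - t) * (t ^ (p - 1 - 1) - (1 - W) * m ^ (p - 1 - 1))
            - (p - 1) * t ^ (p - 1 - 1) * (W * (1 - t))
            = (p - 1) * (1 - t) * (1 - W) * (t ^ (p - 1 - 1) - m ^ (p - 1 - 1)) := by ring
        nlinarith [htc, mul_nonneg (mul_nonneg (mul_nonneg (by linarith : (0:ℝ) ≤ p - 1)
          (by nlinarith [ht.2] : (0:ℝ) ≤ 1 - t)) (by linarith : (0:ℝ) ≤ 1 - W))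
          (by linarith [hmono] : (0:ℝ) ≤ m ^ (p - 1 - 1) - t ^ (p - 1 - 1))]
    simp only [hφ'def]
    nlinarith [key]
  have hanti : AntitoneOn φ (Set.Icc 0 1) := by
    apply antitoneOn_of_hasDerivWithinAt_nonpos (convex_Icc 0 1) hcont
    · intro t ht
      rw [interior_Icc] at ht
      exact ((hderiv t ht).hasDerivWithinAt).mono interior_subset
    · intro t ht
      rw [interior_Icc] at ht
      exact hφ'neg t ht
  have h01 : (1:ℝ) ∈ Set.Icc (0:ℝ) 1 := by constructor <;> norm_num
  have htI : t ∈ Set.Icc (0:ℝ) 1 := ⟨ht0, ht1⟩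
  have hφ1 : φ 1 = 0 := by
    have e1 : ((1 - W) * 1 + W) = 1 := by ring
    simp only [hφdef, e1, Real.one_rpow]
    ring
  have := hanti htI h01 ht1
  rw [hφ1] at this
  simpa only [hφdef] using this

private lemma caseB {p W c : ℝ} (hp2 : 2 ≤ p) (hW : 0 < W) (hW1 : W < 1)
    (hc0 : 0 ≤ c) (hc1 : c < 1) :
    (1 - c) ^ 2 * (W - W ^ p) ≤ (1 - W) * c ^ p + W - ((1 - W) * c + W) ^ p := by
  have hp1 : (1:ℝ) < p := by linarith
  set G : ℝ → ℝ := fun t =>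
    ((1 - W) * t ^ p + W - ((1 - W) * t + W) ^ p) * ((1 - t) ^ 2)⁻¹ with hGdef
  set G' : ℝ → ℝ := fun t =>
    ((1 - W) * (p * t ^ (p - 1)) - (1 - W) * p * ((1 - W) * t + W) ^ (p - 1)) * ((1 - t) ^ 2)⁻¹
      + ((1 - W) * t ^ p + W - ((1 - W) * t + W) ^ p)
        * (-(2 * (1 - t) ^ 1 * (-1)) / ((1 - t) ^ 2) ^ 2) with hG'def
  have hm : ∀ t : ℝ, HasDerivAt (fun t => (1 - W) * t + W) (1 - W) t := fun t => by
    simpa using ((hasDerivAt_id t).const_mul (1 - W)).add_const W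
  have hderiv : ∀ t ∈ Set.Ioo (0:ℝ) c, HasDerivAt G (G' t) t := by
    intro t ht
    have htc1 : t < 1 := ht.2.trans hc1
    have d5 : HasDerivAt (fun t : ℝ => t ^ p) (p * t ^ (p - 1)) t :=
      Real.hasDerivAt_rpow_const (Or.inr hp1.le)
    have d6 : HasDerivAt (fun t : ℝ => ((1 - W) * t + W) ^ p)
        ((1 - W) * p * ((1 - W) * t + W) ^ (p - 1)) t := (hm t).rpow_const (Or.inr hp1.le)
    have dh : HasDerivAt (fun t : ℝ => (1 - W) * t ^ p + W - ((1 - W) * t + W) ^ p)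
        ((1 - W) * (p * t ^ (p - 1)) - (1 - W) * p * ((1 - W) * t + W) ^ (p - 1)) t :=
      ((d5.const_mul (1 - W)).add_const W).sub d6
    have dsq : HasDerivAt (fun t : ℝ => (1 - t) ^ 2) (2 * (1 - t) ^ 1 * (-1)) t :=
      ((hasDerivAt_id t).const_sub 1).pow 2
    have hne : (1 - t) ^ 2 ≠ 0 := pow_ne_zero 2 (by linarith)
    have dinv := dsq.inv hne
    exact dh.mul dinv
  have hcont : ContinuousOn G (Set.Icc 0 c) := by
    have c1' : Continuous fun t : ℝ => t ^ p := continuous_rpow_const (by linarith)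
    have c3 : Continuous fun t : ℝ => ((1 - W) * t + W) ^ p :=
      Continuous.rpow_const (by continuity) (fun x => Or.inr (by linarith))
    have ch : Continuous fun t : ℝ => (1 - W) * t ^ p + W - ((1 - W) * t + W) ^ p :=
      ((continuous_const.mul c1').add continuous_const).sub c3
    apply ContinuousOn.mul ch.continuousOn
    have csq : Continuous fun t : ℝ => ((1 - t) ^ 2 : ℝ) := by continuity
    apply ContinuousOn.inv₀ csq.continuousOn
    intro x hx
    have hx1 : x < 1 := lt_of_le_of_lt hx.2 hc1
    exact pow_ne_zero 2 (by linarith)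
  have hG'pos : ∀ t ∈ Set.Ioo (0:ℝ) c, 0 ≤ G' t := by
    intro t ht
    have htc1 : t < 1 := ht.2.trans hc1
    have h1t : (0:ℝ) < 1 - t := by linarith
    have hphi := phi_nonneg hp2 hW hW1 ht.1.le htc1.le
    have e : G' t = (p * (1 - W) * (1 - t) * (t ^ (p - 1) - ((1 - W) * t + W) ^ (p - 1))
        + 2 * ((1 - W) * t ^ p + W - ((1 - W) * t + W) ^ p)) / (1 - t) ^ 3 := by
      rw [hG'def]
      field_simp
    rw [e]
    positivity
  have hmono : MonotoneOn G (Set.Icc 0 c) := by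
    apply monotoneOn_of_hasDerivWithinAt_nonneg (convex_Icc 0 c) hcont
    · intro t ht
      rw [interior_Icc] at ht
      exact ((hderiv t ht).hasDerivWithinAt).mono interior_subset
    · intro t ht
      rw [interior_Icc] at ht
      exact hG'pos t ht
  have h0I : (0:ℝ) ∈ Set.Icc (0:ℝ) c := ⟨le_refl 0, hc0⟩
  have hcI : c ∈ Set.Icc (0:ℝ) c := ⟨hc0, le_refl c⟩
  have hGle := hmono h0I hcI hc0
  have hG0 : G 0 = W - W ^ p := by
    simp only [hGdef]
    norm_num [Real.zero_rpow (ne_of_gt (by linarith : (0:ℝ) < p))]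
  rw [hG0] at hGle
  -- multiply by (1-c)^2
  have hsq : (0:ℝ) < (1 - c) ^ 2 := pow_pos (by linarith) 2
  have h3 := mul_le_mul_of_nonneg_right hGle hsq.le
  rw [hGdef] at h3
  simp only at h3
  rw [mul_assoc, inv_mul_cancel₀ (ne_of_gt hsq), mul_one] at h3
  linarith [h3]

private lemma core_ineq {p w₀ W c : ℝ} (hp : 1 < p) (hw₀ : 0 < w₀) (hW : 0 < W)
    (hsum : w₀ + W = 1) (hc0 : 0 ≤ c) (hc1 : c < 1) :
    (w₀ * c + W) ^ p ≤
      (1 - (1 - c) ^ 2 * W * min (p * (p - 1) * w₀ / 2) (1 - W ^ (p - 1)))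
        * (w₀ * c ^ p + W) := by
  obtain rfl : w₀ = 1 - W := by linarith
  have hW1 : W < 1 := by linarith
  set μ := min (p * (p - 1) * (1 - W) / 2) (1 - W ^ (p - 1)) with hμdef
  have hμ0 : 0 ≤ μ := by
    apply le_min
    · have h1 : (0:ℝ) ≤ p * (p - 1) := mul_nonneg (by linarith) (by linarith)
      have h2 : (0:ℝ) ≤ 1 - W := by linarith
      positivity
    · have : W ^ (p - 1) ≤ 1 := Real.rpow_le_one hW.le hW1.le (by linarith)
      linarith
  have hQ1 : (1 - W) * c ^ p + W ≤ 1 := by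
    have h1 : c ^ p ≤ 1 := Real.rpow_le_one hc0 hc1.le (by linarith)
    nlinarith [h1, hW, hW1]
  have hh : (1 - c) ^ 2 * W * μ ≤ (1 - W) * c ^ p + W - ((1 - W) * c + W) ^ p := by
    rcases le_total p 2 with hp2 | hp2
    · have hA := caseA hp hp2 hW hW1 hc0 hc1.le
      have hle : μ ≤ p * (p - 1) * (1 - W) / 2 := min_le_left _ _
      have hWc : (0:ℝ) ≤ (1 - c) ^ 2 * W := by positivity
      nlinarith [mul_le_mul_of_nonneg_left hle hWc, hA]
    · have hB := caseB hp2 hW hW1 hc0 hc1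
      have hle : μ ≤ 1 - W ^ (p - 1) := min_le_right _ _
      have hWc : (0:ℝ) ≤ (1 - c) ^ 2 * W := by positivity
      have hWp : W * (1 - W ^ (p - 1)) = W - W ^ p := by
        have e : W ^ (1 + (p - 1)) = W ^ (1:ℝ) * W ^ (p - 1) := Real.rpow_add hW 1 (p - 1)
        have e2 : (1:ℝ) + (p - 1) = p := by ring
        rw [e2, Real.rpow_one] at e
        rw [mul_sub, mul_one, ← e]
      have step := mul_le_mul_of_nonneg_left hle hWc
      -- (1-c)^2 * W * μ ≤ (1-c)^2 * W * (1 - W^(p-1)) = (1-c)^2 * (W - W^p)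
      have e3 : (1 - c) ^ 2 * W * (1 - W ^ (p - 1)) = (1 - c) ^ 2 * (W - W ^ p) := by
        rw [mul_assoc, hWp]
      nlinarith [step, e3, hB]
  have hμW : (0:ℝ) ≤ (1 - c) ^ 2 * W * μ := by positivity
  nlinarith [hh, mul_le_mul_of_nonneg_left hQ1 hμW]

theorem refined_jensen_weighted
    {S : Type*} [Fintype S]
    (hS : 2 ≤ Fintype.card S)
    (p : ℝ) (hp : 1 < p)
    (w : S → ℝ) (hw : ∀ x, w x ∈ Set.Ioo (0 : ℝ) 1) (hw1 : ∑ x, w x = 1)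
    (γ : S → ℝ) (hγ : ∀ x, 0 ≤ γ x)
    (ε : ℝ) (hε : 0 < ε)
    (x₀ x' : S) (hne : x₀ ≠ x')
    (hx' : 0 < γ x') (hx₀ : γ x₀ ≤ ε * γ x')
    (hsmall : ε * (1 - w x₀) / w x' < 1)
    (δ : ℝ)
    (hδ : δ = (1 - ε * (1 - w x₀) / w x') ^ 2 * (1 - w x₀) *
        min (p * (p - 1) * w x₀ / 2) (1 - (1 - w x₀) ^ (p - 1))) :
    (∑ x, w x * γ x) ^ p ≤ (1 - δ) * ∑ x, w x * γ x ^ p := by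
  classical
  obtain ⟨hw₀0, hw₀1⟩ := hw x₀
  obtain ⟨hw'0, hw'1⟩ := hw x'
  obtain ⟨W, hWdef⟩ : ∃ W : ℝ, W = 1 - w x₀ := ⟨_, rfl⟩
  have hWpos : 0 < W := by rw [hWdef]; linarith
  have hW1 : W < 1 := by rw [hWdef]; linarith
  obtain ⟨T, hTdef⟩ : ∃ T : Finset S, T = Finset.univ.erase x₀ := ⟨_, rfl⟩
  have hx'T : x' ∈ T := by
    rw [hTdef]; exact Finset.mem_erase.2 ⟨hne.symm, Finset.mem_univ x'⟩
  have hsumT : ∀ f : S → ℝ, (∑ x ∈ T, f x) + f x₀ = ∑ x, f x := fun f => by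
    rw [hTdef]; exact Finset.sum_erase_add Finset.univ f (Finset.mem_univ x₀)
  have hWsum : ∑ x ∈ T, w x = W := by
    have := hsumT w
    rw [hw1] at this
    rw [hWdef]; linarith
  obtain ⟨A, hAdef⟩ : ∃ A : ℝ, A = ∑ x ∈ T, w x * γ x := ⟨_, rfl⟩
  have hA_ge : w x' * γ x' ≤ A := by
    rw [hAdef]
    exact Finset.single_le_sum (f := fun x => w x * γ x)
      (fun i _ => mul_nonneg (hw i).1.le (hγ i)) hx'T
  have hA0 : 0 < A := lt_of_lt_of_le (mul_pos hw'0 hx') hA_ge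
  obtain ⟨c, hcdef⟩ : ∃ c : ℝ, c = ε * (1 - w x₀) / w x' := ⟨_, rfl⟩
  have hc0 : 0 < c := by
    rw [hcdef]; exact div_pos (mul_pos hε (by linarith)) hw'0
  have hc1 : c < 1 := by rw [hcdef]; exact hsmall
  obtain ⟨cb, hcbdef⟩ : ∃ cb : ℝ, cb = W * γ x₀ / A := ⟨_, rfl⟩
  have hcb0 : 0 ≤ cb := by
    rw [hcbdef]; exact div_nonneg (mul_nonneg hWpos.le (hγ x₀)) hA0.le
  have hcbc : cb ≤ c := by
    rw [hcbdef, hcdef, div_le_div_iff₀ hA0 hw'0]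
    have h1 : W * γ x₀ * w x' ≤ W * (ε * γ x') * w x' :=
      mul_le_mul_of_nonneg_right (mul_le_mul_of_nonneg_left hx₀ hWpos.le) hw'0.le
    have h2 : ε * W * (w x' * γ x') ≤ ε * W * A :=
      mul_le_mul_of_nonneg_left hA_ge (mul_pos hε hWpos).le
    rw [← hWdef]
    linarith [h1, h2]
  have hcb1 : cb < 1 := lt_of_le_of_lt hcbc hc1
  obtain ⟨s, hsdef⟩ : ∃ s : ℝ, s = A / W := ⟨_, rfl⟩
  have hs0 : 0 < s := by rw [hsdef]; exact div_pos hA0 hWpos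
  have hγ₀eq : γ x₀ = cb * s := by
    rw [hcbdef, hsdef]
    field_simp
  -- Jensen on T
  have hconv : ConvexOn ℝ (Set.Ici 0) fun x : ℝ => x ^ p := convexOn_rpow hp.le
  have hkey := hconv.map_sum_le (t := T) (w := fun x => w x / W) (p := γ)
    (fun i _ => div_nonneg (hw i).1.le hWpos.le)
    (by rw [← Finset.sum_div, hWsum, div_self hWpos.ne'])
    (fun i _ => hγ i)
  simp only [smul_eq_mul] at hkey
  have he : ∑ x ∈ T, (w x / W) * γ x = A / W := by
    rw [hAdef, Finset.sum_div]
    apply Finset.sum_congr rfl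
    intro x _
    ring
  rw [he] at hkey
  have he2 : ∑ x ∈ T, (w x / W) * γ x ^ p = (∑ x ∈ T, w x * γ x ^ p) / W := by
    rw [Finset.sum_div]
    apply Finset.sum_congr rfl
    intro x _
    ring
  rw [he2] at hkey
  -- hkey : (A / W) ^ p ≤ (∑ x ∈ T, w x * γ x ^ p) / W
  have hJ : W * s ^ p ≤ ∑ x ∈ T, w x * γ x ^ p := by
    rw [hsdef]
    have := mul_le_mul_of_nonneg_left hkey hWpos.le
    calc W * (A / W) ^ p ≤ W * ((∑ x ∈ T, w x * γ x ^ p) / W) := this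
      _ = ∑ x ∈ T, w x * γ x ^ p := by field_simp
  -- core inequality at cb
  obtain ⟨μ, hμdef⟩ : ∃ μ : ℝ, μ = min (p * (p - 1) * w x₀ / 2) (1 - W ^ (p - 1)) := ⟨_, rfl⟩
  obtain ⟨lam, hlamdef⟩ : ∃ lam : ℝ, lam = (1 - cb) ^ 2 * W * μ := ⟨_, rfl⟩
  have hcore := core_ineq (w₀ := w x₀) (W := W) (c := cb) hp hw₀0 hWpos
    (by rw [hWdef]; ring) hcb0 hcb1
  rw [← hμdef, ← hlamdef] at hcore
  have hμ0 : 0 ≤ μ := by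
    rw [hμdef]
    apply le_min
    · have h1 : (0:ℝ) ≤ p * (p - 1) := mul_nonneg (by linarith) (by linarith)
      positivity
    · have : W ^ (p - 1) ≤ 1 := Real.rpow_le_one hWpos.le hW1.le (by linarith)
      linarith
  have hlam0 : 0 ≤ lam := by
    rw [hlamdef]
    have h1 : (0:ℝ) ≤ (1 - cb) ^ 2 := sq_nonneg _
    exact mul_nonneg (mul_nonneg h1 hWpos.le) hμ0
  have hlam1 : lam ≤ 1 := by
    have h1 : (1 - cb) ^ 2 ≤ 1 := pow_le_one₀ (by linarith) (by linarith)
    have h2 : μ ≤ 1 := by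
      have hWp : (0:ℝ) < W ^ (p - 1) := Real.rpow_pos_of_pos hWpos _
      have h3 := min_le_right (p * (p - 1) * w x₀ / 2) (1 - W ^ (p - 1))
      rw [hμdef]
      exact le_trans h3 (by linarith)
    have hWμ : W * μ ≤ 1 := by
      calc W * μ ≤ 1 * 1 := mul_le_mul hW1.le h2 hμ0 (by norm_num)
        _ = 1 := by norm_num
    have hWμ0 : 0 ≤ W * μ := mul_nonneg hWpos.le hμ0
    calc lam = (1 - cb) ^ 2 * (W * μ) := by rw [hlamdef]; ring
      _ ≤ 1 * 1 := mul_le_mul h1 hWμ (by positivity) (by norm_num)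
      _ = 1 := by norm_num
  have hδ2 : δ = (1 - c) ^ 2 * W * μ := by
    rw [hδ, hμdef, hcdef, hWdef]
  have hδlam : δ ≤ lam := by
    rw [hδ2, hlamdef]
    have h1 : (1 - c) ^ 2 ≤ (1 - cb) ^ 2 := by
      apply pow_le_pow_left₀ (by linarith) (by linarith)
    have h2 : (0:ℝ) ≤ W * μ := mul_nonneg hWpos.le hμ0
    calc (1 - c) ^ 2 * W * μ = (1 - c) ^ 2 * (W * μ) := by ring
      _ ≤ (1 - cb) ^ 2 * (W * μ) := mul_le_mul_of_nonneg_right h1 h2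
      _ = (1 - cb) ^ 2 * W * μ := by ring
  -- assemble
  have hsplit : ∑ x, w x * γ x = w x₀ * γ x₀ + A := by
    rw [hAdef, ← hsumT (fun x => w x * γ x)]
    ring
  have hsplitp : ∑ x, w x * γ x ^ p = w x₀ * γ x₀ ^ p + ∑ x ∈ T, w x * γ x ^ p := by
    rw [← hsumT (fun x => w x * γ x ^ p)]
    ring
  have htot : ∑ x, w x * γ x = s * (w x₀ * cb + W) := by
    have hsW : s * W = A := by rw [hsdef]; field_simp
    rw [hsplit, hγ₀eq, ← hsW]
    ring
  have hLHS : (∑ x, w x * γ x) ^ p = s ^ p * (w x₀ * cb + W) ^ p := by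
    rw [htot, Real.mul_rpow hs0.le (add_nonneg (mul_nonneg hw₀0.le hcb0) hWpos.le)]
  have hcbsp : cb ^ p * s ^ p = γ x₀ ^ p := by
    rw [← Real.mul_rpow hcb0 hs0.le, ← hγ₀eq]
  have step1 : (∑ x, w x * γ x) ^ p ≤ s ^ p * ((1 - lam) * (w x₀ * cb ^ p + W)) := by
    rw [hLHS]
    exact mul_le_mul_of_nonneg_left hcore (Real.rpow_nonneg hs0.le p)
  have e2 : s ^ p * ((1 - lam) * (w x₀ * cb ^ p + W)) =
      (1 - lam) * (w x₀ * (cb ^ p * s ^ p) + W * s ^ p) := by ring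
  rw [e2, hcbsp] at step1
  have step2 : (1 - lam) * (w x₀ * γ x₀ ^ p + W * s ^ p) ≤
      (1 - lam) * (∑ x, w x * γ x ^ p) := by
    apply mul_le_mul_of_nonneg_left _ (by linarith : (0:ℝ) ≤ 1 - lam)
    rw [hsplitp]
    linarith [hJ]
  have hsump_nonneg : 0 ≤ ∑ x, w x * γ x ^ p := by
    apply Finset.sum_nonneg
    intro i _
    exact mul_nonneg (hw i).1.le (Real.rpow_nonneg (hγ i) p)
  have step3 : (1 - lam) * (∑ x, w x * γ x ^ p) ≤ (1 - δ) * (∑ x, w x * γ x ^ p) :=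
    mul_le_mul_of_nonneg_right (by linarith) hsump_nonneg
  linarith [step1, step2, step3]
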